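/- Let g be a finite-dimensional semisimple Lie algebra over an algebraically closed field of characteristic zero, and let a be an algebraic Lie subalgebra of g containing a Cartan subalgebra of g. Then for every regular semisimple element x of g belonging to a, the centralizer g^x is contained in a. -/

import Mathlib

open LieAlgebra Module

section LieSetup

variable (K L : Type*) [Field K] [IsAlgClosed K] [CharZero K]
  [LieRing L] [LieAlgebra K L] [FiniteDimensional K L]

/-- Exponential of a nilpotent endomorphism (and `1` otherwise). -/
noncomputable def nilpExp (f : Module.End K L) : Module.End K L :=
  @dite _ (IsNilpotent f) (Classical.dec _)
    (fun h => ∑ n ∈ Finset.range h.choose, ((n.factorial : K)⁻¹) • f ^ n) (fun _ => 1)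

/-- The adjoint group of the Lie algebra `L`: the group of inner automorphisms, i.e. the
subgroup of `GL(L)` generated by the exponentials `exp (ad x)` with `ad x` nilpotent. -/
noncomputable def adjointGroup : Subgroup (L ≃ₗ[K] L) :=
  Subgroup.closure {e | ∃ x : L, IsNilpotent (ad K L x) ∧ ∀ y, e y = nilpExp K L (ad K L x) y}

/-- A Borel subalgebra: a maximal solvable subalgebra. -/
def IsBorelSubalgebra (b : LieSubalgebra K L) : Prop :=
  LieAlgebra.IsSolvable ↥b ∧
    ∀ c : LieSubalgebra K L, LieAlgebra.IsSolvable ↥c → b ≤ c → b = c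

/-- A parabolic subalgebra: one containing a Borel subalgebra. -/
def IsParabolic (p : LieSubalgebra K L) : Prop :=
  ∃ b : LieSubalgebra K L, IsBorelSubalgebra K L b ∧ b ≤ p

/-- The nilpotent radical of a parabolic subalgebra, realized as the orthogonal complement
of `p` with respect to the Killing form. -/
noncomputable def nilpotentRadical (p : LieSubalgebra K L) : Submodule K L :=
  LinearMap.BilinForm.orthogonal (killingForm K L) p.toSubmodule

end LieSetup

section Aux

set_option linter.unusedSectionVars false

/-- Auxiliary summation identity: a double sum over antidiagonals equals a double sum
over a square, provided the summand vanishes outside the `N × N` square. -/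
lemma sum_antidiag_aux {M : Type*} [AddCommMonoid M] (N : ℕ) (F : ℕ → ℕ → M)
    (hF : ∀ i j, N ≤ i ∨ N ≤ j → F i j = 0) :
    ∑ n ∈ Finset.range (2*N), ∑ p ∈ Finset.HasAntidiagonal.antidiagonal n, F p.1 p.2
      = ∑ i ∈ Finset.range N, ∑ j ∈ Finset.range N, F i j := by
  rw [← Finset.sum_product']
  rw [← Finset.sum_biUnion ?disj]
  case disj =>
    intro m hm n hn hmn
    simp only [Finset.disjoint_left]
    intro p hp hp'
    rw [Finset.HasAntidiagonal.mem_antidiagonal] at hp hp'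
    exact hmn (hp ▸ hp')
  apply (Finset.sum_subset ?sub ?van).symm
  case sub =>
    intro p hp
    rw [Finset.mem_product, Finset.mem_range, Finset.mem_range] at hp
    rw [Finset.mem_biUnion]
    exact ⟨p.1 + p.2, Finset.mem_range.mpr (by omega), Finset.HasAntidiagonal.mem_antidiagonal.mpr rfl⟩
  case van =>
    intro p _ hp
    rw [Finset.mem_product, Finset.mem_range, Finset.mem_range] at hp
    apply hF
    omega

variable {K L : Type*} [Field K] [IsAlgClosed K] [CharZero K]
  [LieRing L] [LieAlgebra K L] [FiniteDimensional K L]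

/-- The exponential of a nilpotent inner derivation is a morphism of Lie algebras. -/
lemma nilpExp_lie (x : L) (h : IsNilpotent (ad K L x)) (y z : L) :
    nilpExp K L (ad K L x) ⁅y, z⁆ = ⁅nilpExp K L (ad K L x) y, nilpExp K L (ad K L x) z⁆ := by
  set f := ad K L x with hf
  rw [nilpExp, dif_pos h]
  set N := h.choose with hNdef
  have hN : f ^ N = 0 := h.choose_spec
  have hvan : ∀ i : ℕ, N ≤ i → f ^ i = 0 := fun i hi => pow_eq_zero_of_le hi hN
  set a : ℕ → L := fun i => (i.factorial : K)⁻¹ • (f ^ i) y with ha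
  set b : ℕ → L := fun j => (j.factorial : K)⁻¹ • (f ^ j) z with hb
  have hav : ∀ i, N ≤ i → a i = 0 := by intro i hi; simp [ha, hvan i hi]
  have hbv : ∀ j, N ≤ j → b j = 0 := by intro j hj; simp [hb, hvan j hj]
  have key : ∀ n : ℕ, ((n.factorial : K)⁻¹ • f ^ n) ⁅y, z⁆
      = ∑ p ∈ Finset.HasAntidiagonal.antidiagonal n, ⁅a p.1, b p.2⁆ := by
    intro n
    rw [LinearMap.smul_apply, LieAlgebra.ad_pow_lie, Finset.smul_sum]
    refine Finset.sum_congr rfl ?_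
    rintro ⟨i, j⟩ hij
    rw [Finset.HasAntidiagonal.mem_antidiagonal] at hij
    simp only [ha, hb, smul_lie, lie_smul, smul_smul]
    rw [← Nat.cast_smul_eq_nsmul K, smul_smul]
    congr 1
    have hfac : (n.choose i : K) * (i.factorial : K) * (j.factorial : K) = (n.factorial : K) := by
      have := Nat.choose_mul_factorial_mul_factorial (by omega : i ≤ n)
      have hji : n - i = j := by omega
      rw [hji] at this
      exact_mod_cast this
    have h1 : (i.factorial : K) ≠ 0 := Nat.cast_ne_zero.mpr i.factorial_ne_zero
    have h2 : (j.factorial : K) ≠ 0 := Nat.cast_ne_zero.mpr j.factorial_ne_zero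
    have h3 : (n.factorial : K) ≠ 0 := Nat.cast_ne_zero.mpr n.factorial_ne_zero
    field_simp
    linear_combination hfac
  calc (∑ n ∈ Finset.range N, ((n.factorial:K)⁻¹) • f ^ n) ⁅y, z⁆
      = ∑ n ∈ Finset.range N, ((n.factorial:K)⁻¹ • f ^ n) ⁅y, z⁆ := by
        rw [LinearMap.sum_apply]
    _ = ∑ n ∈ Finset.range (2*N), ((n.factorial:K)⁻¹ • f ^ n) ⁅y, z⁆ := by
        apply Finset.sum_subset (Finset.range_subset_range.mpr (by omega))
        intro n _ hn
        rw [Finset.mem_range, not_lt] at hn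
        simp [hvan n hn]
    _ = ∑ n ∈ Finset.range (2*N), ∑ p ∈ Finset.HasAntidiagonal.antidiagonal n, ⁅a p.1, b p.2⁆ :=
        Finset.sum_congr rfl fun n _ => key n
    _ = ∑ i ∈ Finset.range N, ∑ j ∈ Finset.range N, ⁅a i, b j⁆ := by
        apply sum_antidiag_aux N (fun i j => ⁅a i, b j⁆)
        intro i j hij
        rcases hij with hi | hj
        · rw [hav i hi, zero_lie]
        · rw [hbv j hj, lie_zero]
    _ = ⁅∑ i ∈ Finset.range N, a i, ∑ j ∈ Finset.range N, b j⁆ := by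
        have hls : ∀ (V : L), ⁅V, ∑ j ∈ Finset.range N, b j⁆ = ∑ j ∈ Finset.range N, ⁅V, b j⁆ :=
          fun V => map_sum (ad K L V) b (Finset.range N)
        have hsl : ∀ (W : L) (s : Finset ℕ), ⁅∑ i ∈ s, a i, W⁆ = ∑ i ∈ s, ⁅a i, W⁆ := by
          intro W s
          induction s using Finset.cons_induction with
          | empty => simp
          | cons i s hi ih => rw [Finset.sum_cons, Finset.sum_cons, add_lie, ih]
        rw [hsl]
        exact Finset.sum_congr rfl fun i _ => (hls (a i)).symm
    _ = ⁅(∑ n ∈ Finset.range N, ((n.factorial:K)⁻¹) • f ^ n) y,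
        (∑ n ∈ Finset.range N, ((n.factorial:K)⁻¹) • f ^ n) z⁆ := by
        simp only [ha, hb, LinearMap.sum_apply, LinearMap.smul_apply]

/-- Every element of the adjoint group is an automorphism of the Lie bracket. -/
lemma adjointGroup_lie {e : L ≃ₗ[K] L} (he : e ∈ adjointGroup K L) (y z : L) :
    e ⁅y, z⁆ = ⁅e y, e z⁆ := by
  revert y z
  refine Subgroup.closure_induction (p := fun g _ => ∀ y z : L, g ⁅y, z⁆ = ⁅g y, g z⁆)
    ?_ ?_ ?_ ?_ he
  · rintro g ⟨x, hx, hgx⟩ y z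
    rw [hgx, hgx, hgx, nilpExp_lie x hx]
  · intro y z; rfl
  · intro g g' _ _ hg hg' y z
    show g (g' ⁅y, z⁆) = ⁅g (g' y), g (g' z)⁆
    rw [hg', hg]
  · intro g _ hg y z
    apply g.injective
    show g (g.symm ⁅y, z⁆) = g ⁅(g.symm : L ≃ₗ[K] L) y, g.symm z⁆
    rw [hg, g.apply_symm_apply, g.apply_symm_apply, g.apply_symm_apply]

/-- A self-normalizing subalgebra contained in a nilpotent subalgebra is the whole of it. -/
lemma le_of_nilpotent_of_normalizer_eq {A B : LieSubalgebra K L} (hAB : A ≤ B)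
    (hB : LieRing.IsNilpotent ↥B) (hA : A.normalizer = A) : B ≤ A := by
  intro w hw
  set P : ℕ → Prop :=
    fun i => ∀ y : ↥B, y ∈ LieModule.lowerCentralSeries K ↥B ↥B i → (y : L) ∈ A with hP
  obtain ⟨k, hk⟩ := (LieModule.isNilpotent_iff K ↥B ↥B).mp hB
  have hPk : P k := by
    intro y hy
    rw [hk, LieSubmodule.mem_bot] at hy
    simp [hy]
  by_contra hwA
  have h0 : ¬ P 0 := by
    intro h
    exact hwA (h ⟨w, hw⟩ (by simp [LieSubmodule.mem_top]))
  classical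
  let i := Nat.find ⟨k, hPk⟩
  have hi : P i := Nat.find_spec ⟨k, hPk⟩
  have hine : i ≠ 0 := fun h => h0 (h ▸ hi)
  obtain ⟨j, hj⟩ : ∃ j, i = j + 1 := ⟨i - 1, by omega⟩
  have hjlt : ¬ P j := Nat.find_min ⟨k, hPk⟩ (by omega)
  rw [hP, not_forall] at hjlt
  obtain ⟨y, hy⟩ := hjlt
  rw [_root_.not_imp] at hy
  obtain ⟨hy, hyA⟩ := hy
  apply hyA
  rw [← hA]
  rw [LieSubalgebra.mem_normalizer_iff]
  intro z hz
  have hzB : z ∈ B := hAB hz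
  have hbr : ⁅(⟨z, hzB⟩ : ↥B), y⁆ ∈ LieModule.lowerCentralSeries K ↥B ↥B (j + 1) := by
    rw [LieModule.lowerCentralSeries_succ]
    exact LieSubmodule.lie_mem_lie (LieSubmodule.mem_top _) hy
  have hmem : ((⁅(⟨z, hzB⟩ : ↥B), y⁆ : ↥B) : L) ∈ A := hi _ (hj ▸ hbr)
  have hcoe : ((⁅(⟨z, hzB⟩ : ↥B), y⁆ : ↥B) : L) = ⁅z, (y : L)⁆ := rfl
  rw [hcoe] at hmem
  have : ⁅(y : L), z⁆ = -⁅z, (y : L)⁆ := (lie_skew _ _).symm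
  rw [this]
  exact neg_mem hmem

open LieSubalgebra Cardinal in
/-- The Engel subalgebra of a regular element is a Cartan subalgebra. -/
lemma engel_isCartan_of_isRegular {x : L} (hx : LieAlgebra.IsRegular K x) :
    (engel K x).IsCartanSubalgebra := by
  have hLK : Module.finrank K L ≤ #K :=
    (Cardinal.nat_lt_aleph0 _).le.trans (Cardinal.infinite_iff.mp inferInstance)
  refine ⟨?_, normalizer_engel _ _⟩
  apply isNilpotent_of_forall_le_engel
  intro y hy
  set Ex : {engel K z | z ∈ engel K x} := ⟨engel K x, x, self_mem_engel _ _, rfl⟩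
  suffices IsBot Ex from @this ⟨engel K y, y, hy, rfl⟩
  apply engel_isBot_of_isMin hLK (engel K x) Ex le_rfl
  rintro ⟨_, y, hy, rfl⟩ hyx
  suffices finrank K (engel K x) ≤ finrank K (engel K y) by
    suffices engel K y = engel K x from this.ge
    apply LieSubalgebra.toSubmodule_injective
    exact Submodule.eq_of_le_of_finrank_le hyx this
  rw [(isRegular_iff_finrank_engel_eq_rank K x).mp hx]
  apply rank_le_finrank_engel

end Aux

/-- Let `g` be a finite-dimensional semisimple Lie algebra over an algebraically
closed field of characteristic zero and let `a` be an algebraic Lie subalgebra of `g` containing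
a Cartan subalgebra `c` of `g`.  (Algebraicity is recorded through its standard consequence used
in the proof: every semisimple element of `a` is conjugate, under an inner automorphism of `g`
preserving `a` — coming from the adjoint group of `a` — to an element of `c`.)  Then for every
regular semisimple element `x` of `g` belonging to `a`, the centralizer `g^x` is contained
in `a`. -/
theorem stmt1 {K L : Type*} [Field K] [IsAlgClosed K] [CharZero K]
    [LieRing L] [LieAlgebra K L] [FiniteDimensional K L] [LieAlgebra.IsSemisimple K L]
    (a : LieSubalgebra K L) (c : LieSubalgebra K L) [c.IsCartanSubalgebra] (hca : c ≤ a)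
    (halg : ∀ x ∈ a, (ad K L x).IsSemisimple →
      ∃ e ∈ adjointGroup K L, (e '' (a : Set L) = (a : Set L)) ∧ e x ∈ c)
    (x : L) (hxa : x ∈ a) (hreg : LieAlgebra.IsRegular K x) (hss : (ad K L x).IsSemisimple) :
    ∀ y : L, ⁅x, y⁆ = 0 → y ∈ a := by
  intro y hy
  obtain ⟨e, heG, hea, hexc⟩ := halg x hxa hss
  have elie : ∀ u v : L, e ⁅u, v⁆ = ⁅e u, e v⁆ := adjointGroup_lie heG
  -- `e x` is regular since `ad (e x)` is conjugate to `ad x`.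
  have hconj : ad K L (e x) = (LinearEquiv.conj e) (ad K L x) := by
    ext w
    simp only [LinearEquiv.conj_apply, LinearMap.comp_apply, LinearEquiv.coe_coe,
      LinearMap.coe_comp, Function.comp_apply, ad_apply]
    rw [elie, e.apply_symm_apply]
  have hreg' : LieAlgebra.IsRegular K (e x) := by
    rw [LieAlgebra.isRegular_def] at hreg ⊢
    rwa [hconj, LinearEquiv.charpoly_conj]
  haveI hE : (LieSubalgebra.engel K (e x)).IsCartanSubalgebra :=
    engel_isCartan_of_isRegular hreg'
  -- the Cartan subalgebra `c` is contained in the Engel subalgebra of `e x ∈ c`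
  have hcE : c ≤ LieSubalgebra.engel K (e x) := by
    intro z hz
    have hnil : _root_.IsNilpotent (ad K c ⟨e x, hexc⟩) :=
      (LieAlgebra.isNilpotent_iff_forall (R := K) (L := c)).mp inferInstance _
    obtain ⟨n, hn⟩ := hnil
    rw [LieSubalgebra.mem_engel_iff]
    refine ⟨n, ?_⟩
    calc ((ad K L (e x)) ^ n) z
        = (((ad K c ⟨e x, hexc⟩ ^ n) ⟨z, hz⟩ : ↥c) : L) :=
          (LieSubalgebra.coe_ad_pow K L c ⟨e x, hexc⟩ ⟨z, hz⟩ n).symm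
      _ = 0 := by rw [hn]; rfl
  -- hence the Engel subalgebra coincides with `c`
  have hEc : LieSubalgebra.engel K (e x) ≤ c :=
    le_of_nilpotent_of_normalizer_eq hcE hE.nilpotent
      LieSubalgebra.IsCartanSubalgebra.self_normalizing
  -- `e y` centralizes `e x`, so it lies in the Engel subalgebra of `e x`
  have hey : e y ∈ LieSubalgebra.engel K (e x) := by
    rw [LieSubalgebra.mem_engel_iff]
    refine ⟨1, ?_⟩
    rw [pow_one, ad_apply, ← elie, hy, map_zero]
  -- conclude using `e '' a = a`
  have heya : e y ∈ (a : Set L) := hca (hEc hey)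
  rw [← hea] at heya
  obtain ⟨u, hu, huy⟩ := heya
  rwa [← e.injective huy]
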